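/- Let h_n = (-1)^{binomial(n+1,2)} and let h*_n be the Hankel transform of the shifted Rueppel sequence r_{n+1}. Then h*_0 = h_0, h*_{2n} = h*_{n-1} · h_n for n ≥ 1, and h*_{2n+1} = h*_n · h_n. -/

import Mathlib

open Classical

/-- The Rueppel sequence: `r n = 1` iff `n + 1` is a power of `2`. -/

noncomputable def rueppel (n : ℕ) : ℤ := if ∃ k : ℕ, n + 1 = 2 ^ k then 1 else 0

/-- Hankel transform of the Rueppel sequence. -/
noncomputable def h (n : ℕ) : ℤ := (-1 : ℤ) ^ (n * (n + 1) / 2)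

/-- Hankel transform of the shifted Rueppel sequence. -/
noncomputable def hstar (n : ℕ) : ℤ :=
  Matrix.det (Matrix.of fun i j : Fin (n + 1) => rueppel (i + j + 1))

lemma rueppel_odd (t : ℕ) : rueppel (2 * t + 1) = rueppel t := by
  unfold rueppel
  congr 1
  apply propext
  constructor
  · rintro ⟨k, hk⟩
    rcases k with _ | k
    · omega
    · exact ⟨k, by rw [pow_succ] at hk; omega⟩
  · rintro ⟨k, hk⟩
    exact ⟨k + 1, by rw [pow_succ]; omega⟩

lemma rueppel_even (t : ℕ) : rueppel (2 * t) = if t = 0 then 1 else 0 := by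
  unfold rueppel
  rcases Nat.eq_zero_or_pos t with rfl | ht
  · rw [if_pos ⟨0, by norm_num⟩, if_pos rfl]
  · rw [if_neg (show ¬ t = 0 by omega), if_neg]
    rintro ⟨k, hk⟩
    rcases k with _ | k
    · simp at hk; omega
    · rw [pow_succ] at hk; omega

lemma rueppel_zero : rueppel 0 = 1 := by
  unfold rueppel; rw [if_pos ⟨0, rfl⟩]

lemma rueppel_one : rueppel 1 = 1 := by
  unfold rueppel; rw [if_pos ⟨1, rfl⟩]

noncomputable def Hd (n : ℕ) : ℤ := (Matrix.of fun i j : Fin n => rueppel (i + j)).det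
noncomputable def Sd (n : ℕ) : ℤ := (Matrix.of fun i j : Fin n => rueppel (i + j + 1)).det

lemma det_J (k : ℕ) :
    (Matrix.fromBlocks (0 : Matrix (Fin k) (Fin k) ℤ) (1 : Matrix (Fin k) (Fin k) ℤ)
      (1 : Matrix (Fin k) (Fin k) ℤ) (0 : Matrix (Fin k) (Fin k) ℤ)).det = (-1) ^ k := by
  have h1 : (Matrix.fromBlocks (0 : Matrix (Fin k) (Fin k) ℤ) (1 : Matrix (Fin k) (Fin k) ℤ)
      (1 : Matrix (Fin k) (Fin k) ℤ) (0 : Matrix (Fin k) (Fin k) ℤ)) =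
      ((Matrix.fromBlocks 1 1 0 1 : Matrix (Fin k ⊕ Fin k) (Fin k ⊕ Fin k) ℤ) *
          (Matrix.fromBlocks 1 0 (-1) 1 : Matrix (Fin k ⊕ Fin k) (Fin k ⊕ Fin k) ℤ) *
          (Matrix.fromBlocks 1 1 0 1 : Matrix (Fin k ⊕ Fin k) (Fin k ⊕ Fin k) ℤ)) *
        (Matrix.fromBlocks (-1) 0 0 1 : Matrix (Fin k ⊕ Fin k) (Fin k ⊕ Fin k) ℤ) := by
    simp [Matrix.fromBlocks_multiply]
  rw [h1, Matrix.det_mul, Matrix.det_mul, Matrix.det_mul,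
    Matrix.det_fromBlocks_zero₂₁, Matrix.det_fromBlocks_zero₁₂,
    Matrix.det_fromBlocks_zero₂₁]
  simp [Matrix.det_neg]

lemma det_fromBlocks_zero11 {k : ℕ} (B C D : Matrix (Fin k) (Fin k) ℤ) :
    (Matrix.fromBlocks 0 B C D).det = (-1) ^ k * (B.det * C.det) := by
  have h1 : Matrix.fromBlocks (0 : Matrix (Fin k) (Fin k) ℤ) B C D =
      Matrix.fromBlocks (0 : Matrix (Fin k) (Fin k) ℤ) (1 : Matrix (Fin k) (Fin k) ℤ)
        (1 : Matrix (Fin k) (Fin k) ℤ) (0 : Matrix (Fin k) (Fin k) ℤ) *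
        Matrix.fromBlocks C D 0 B := by
    simp [Matrix.fromBlocks_multiply]
  rw [h1, Matrix.det_mul, det_J, Matrix.det_fromBlocks_zero₂₁]
  ring

lemma det_offdiag_lt {p q : ℕ} (h : q < p) (B : Matrix (Fin p) (Fin q) ℤ)
    (C : Matrix (Fin q) (Fin p) ℤ) :
    (Matrix.fromBlocks 0 B C 0).det = 0 := by
  rw [Matrix.det_apply]
  apply Finset.sum_eq_zero
  intro σ _
  have hex : ∃ b : Fin p, ∃ a : Fin p, σ (Sum.inl b) = Sum.inl a := by
    by_contra hc
    push_neg at hc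
    have hf : ∀ b : Fin p, ∃ c : Fin q, σ (Sum.inl b) = Sum.inr c := by
      intro b
      cases hx : σ (Sum.inl b) with
      | inl a => exact absurd hx (hc b a)
      | inr c => exact ⟨c, rfl⟩
    choose f hf using hf
    have hinj : Function.Injective f := by
      intro x y hxy
      have h2 : σ (Sum.inl x) = σ (Sum.inl y) := by rw [hf x, hf y, hxy]
      exact Sum.inl_injective (σ.injective h2)
    have := Fintype.card_le_of_injective f hinj
    simp at this
    omega
  obtain ⟨b, a, hab⟩ := hex
  have : (∏ i, Matrix.fromBlocks (0 : Matrix (Fin p) (Fin p) ℤ) B C 0 (σ i) i) = 0 := by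
    apply Finset.prod_eq_zero (Finset.mem_univ (Sum.inl b))
    rw [hab]
    simp [Matrix.fromBlocks]
  rw [this, smul_zero]

lemma det_offdiag_gt {p q : ℕ} (h : p < q) (B : Matrix (Fin p) (Fin q) ℤ)
    (C : Matrix (Fin q) (Fin p) ℤ) :
    (Matrix.fromBlocks 0 B C 0).det = 0 := by
  have h1 : Matrix.fromBlocks (0 : Matrix (Fin p) (Fin p) ℤ) B C 0 =
      (Matrix.fromBlocks (0 : Matrix (Fin q) (Fin q) ℤ) C B 0).submatrix
        (Equiv.sumComm (Fin p) (Fin q)) (Equiv.sumComm (Fin p) (Fin q)) := by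
    funext i j
    rcases i with a | a <;> rcases j with b | b <;> simp [Matrix.fromBlocks]
  rw [h1, Matrix.det_submatrix_equiv_self, det_offdiag_lt h C B]

def eO (m : ℕ) : (Fin (m + 1) ⊕ Fin m) ≃ Fin (2 * m + 1) where
  toFun := Sum.elim (fun a => ⟨2 * a.1, by have := a.2; omega⟩)
    (fun a => ⟨2 * a.1 + 1, by have := a.2; omega⟩)
  invFun := fun n => if h : n.1 % 2 = 0 then Sum.inl ⟨n.1 / 2, by have := n.2; omega⟩
    else Sum.inr ⟨n.1 / 2, by have := n.2; omega⟩
  left_inv := by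
    rintro (a | a)
    · simp only [Sum.elim_inl, Fin.val_mk]
      refine (dif_pos (by omega : 2 * a.1 % 2 = 0)).trans ?_
      exact congrArg Sum.inl (Fin.ext (by simp only [Fin.val_mk]; omega))
    · simp only [Sum.elim_inr, Fin.val_mk]
      refine (dif_neg (by omega : ¬ (2 * a.1 + 1) % 2 = 0)).trans ?_
      exact congrArg Sum.inr (Fin.ext (by simp only [Fin.val_mk]; omega))
  right_inv := by
    intro n
    by_cases hn : n.1 % 2 = 0
    · dsimp only
      rw [dif_pos hn]
      exact Fin.ext (by simp only [Sum.elim_inl, Fin.val_mk]; omega)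
    · dsimp only
      rw [dif_neg hn]
      exact Fin.ext (by simp only [Sum.elim_inr, Fin.val_mk]; omega)

def eE (m : ℕ) : (Fin (m + 1) ⊕ Fin (m + 1)) ≃ Fin (2 * m + 2) where
  toFun := Sum.elim (fun a => ⟨2 * a.1, by have := a.2; omega⟩)
    (fun a => ⟨2 * a.1 + 1, by have := a.2; omega⟩)
  invFun := fun n => if h : n.1 % 2 = 0 then Sum.inl ⟨n.1 / 2, by have := n.2; omega⟩
    else Sum.inr ⟨n.1 / 2, by have := n.2; omega⟩
  left_inv := by
    rintro (a | a)
    · simp only [Sum.elim_inl, Fin.val_mk]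
      refine (dif_pos (by omega : 2 * a.1 % 2 = 0)).trans ?_
      exact congrArg Sum.inl (Fin.ext (by simp only [Fin.val_mk]; omega))
    · simp only [Sum.elim_inr, Fin.val_mk]
      refine (dif_neg (by omega : ¬ (2 * a.1 + 1) % 2 = 0)).trans ?_
      exact congrArg Sum.inr (Fin.ext (by simp only [Fin.val_mk]; omega))
  right_inv := by
    intro n
    by_cases hn : n.1 % 2 = 0
    · dsimp only
      rw [dif_pos hn]
      exact Fin.ext (by simp only [Sum.elim_inl, Fin.val_mk]; omega)
    · dsimp only
      rw [dif_neg hn]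
      exact Fin.ext (by simp only [Sum.elim_inr, Fin.val_mk]; omega)

lemma K1 (m : ℕ) : Sd (2 * m + 1) = Hd (m + 1) * Sd m := by
  rw [Sd, ← Matrix.det_submatrix_equiv_self (eO m)]
  have h1 : (Matrix.of fun i j : Fin (2 * m + 1) => rueppel (i + j + 1)).submatrix (eO m) (eO m) =
      Matrix.fromBlocks (Matrix.of fun a b : Fin (m + 1) => rueppel (a + b)) 0 0
        (Matrix.of fun a b : Fin m => rueppel (a + b + 1)) := by
    funext i j
    rcases i with a | a <;> rcases j with b | b <;>
      simp only [Matrix.submatrix_apply, Matrix.of_apply, eO, Equiv.coe_fn_mk, Sum.elim_inl,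
        Sum.elim_inr, Matrix.fromBlocks, Matrix.of_apply, Sum.elim_inl, Sum.elim_inr,
        Matrix.zero_apply]
    · rw [show 2 * a.1 + 2 * b.1 + 1 = 2 * (a.1 + b.1) + 1 by ring, rueppel_odd]
    · rw [show 2 * a.1 + (2 * b.1 + 1) + 1 = 2 * (a.1 + b.1 + 1) by ring, rueppel_even,
        if_neg (by omega)]
    · rw [show 2 * a.1 + 1 + 2 * b.1 + 1 = 2 * (a.1 + b.1 + 1) by ring, rueppel_even,
        if_neg (by omega)]
    · rw [show 2 * a.1 + 1 + (2 * b.1 + 1) + 1 = 2 * (a.1 + b.1 + 1) + 1 by ring, rueppel_odd]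
  rw [h1, Matrix.det_fromBlocks_zero₂₁, Hd, Sd]

lemma K2 (m : ℕ) : Sd (2 * m + 2) = Hd (m + 1) * Sd (m + 1) := by
  rw [Sd, ← Matrix.det_submatrix_equiv_self (eE m)]
  have h1 : (Matrix.of fun i j : Fin (2 * m + 2) => rueppel (i + j + 1)).submatrix (eE m) (eE m) =
      Matrix.fromBlocks (Matrix.of fun a b : Fin (m + 1) => rueppel (a + b)) 0 0
        (Matrix.of fun a b : Fin (m + 1) => rueppel (a + b + 1)) := by
    funext i j
    rcases i with a | a <;> rcases j with b | b <;>
      simp only [Matrix.submatrix_apply, Matrix.of_apply, eE, Equiv.coe_fn_mk, Sum.elim_inl,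
        Sum.elim_inr, Matrix.fromBlocks, Matrix.of_apply, Sum.elim_inl, Sum.elim_inr,
        Matrix.zero_apply]
    · rw [show 2 * a.1 + 2 * b.1 + 1 = 2 * (a.1 + b.1) + 1 by ring, rueppel_odd]
    · rw [show 2 * a.1 + (2 * b.1 + 1) + 1 = 2 * (a.1 + b.1 + 1) by ring, rueppel_even,
        if_neg (by omega)]
    · rw [show 2 * a.1 + 1 + 2 * b.1 + 1 = 2 * (a.1 + b.1 + 1) by ring, rueppel_even,
        if_neg (by omega)]
    · rw [show 2 * a.1 + 1 + (2 * b.1 + 1) + 1 = 2 * (a.1 + b.1 + 1) + 1 by ring, rueppel_odd]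
  rw [h1, Matrix.det_fromBlocks_zero₂₁, Hd, Sd]

def g (m k : ℕ) : (Fin 1 ⊕ (Fin m ⊕ Fin k)) ≃ (Fin (m + 1) ⊕ Fin k) where
  toFun := Sum.elim (fun _ => Sum.inl 0)
    (Sum.elim (fun a => Sum.inl a.succ) (fun a => Sum.inr a))
  invFun := Sum.elim
    (fun a => if h : a.1 = 0 then Sum.inl 0
      else Sum.inr (Sum.inl ⟨a.1 - 1, by have := a.2; omega⟩))
    (fun a => Sum.inr (Sum.inr a))
  left_inv := by
    rintro (a | (a | a))
    · obtain rfl := Subsingleton.elim a 0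
      rfl
    · rfl
    · rfl
  right_inv := by
    rintro (a | a)
    · simp only [Sum.elim_inl]
      by_cases h : a.1 = 0
      · simp [h, Fin.ext_iff]
      · simp [h, Fin.ext_iff]
        omega
    · rfl

lemma K4 (m : ℕ) : Hd (2 * m + 1) = (-1) ^ m * (Sd m * Sd m) := by
  classical
  set M := (Matrix.of fun i j : Fin (2 * m + 1) => rueppel (i + j)).submatrix (eO m) (eO m)
    with hM
  have hdet : Hd (2 * m + 1) = M.det := by
    rw [Hd, ← Matrix.det_submatrix_equiv_self (eO m)]
  set v1 : (Fin (m + 1) ⊕ Fin m) → ℤ :=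
    Sum.elim (fun a => if a.1 = 0 then 1 else 0) 0 with hv1
  set v2 : (Fin (m + 1) ⊕ Fin m) → ℤ := Sum.elim 0 (fun a => rueppel a.1) with hv2
  have hcol : (fun i => M i (Sum.inl 0)) = v1 + v2 := by
    funext i
    rcases i with a | a
    · simp only [hM, hv1, hv2, Matrix.submatrix_apply, Matrix.of_apply, eO, Equiv.coe_fn_mk,
        Sum.elim_inl, Pi.add_apply, Pi.zero_apply, add_zero, Fin.val_mk, Fin.val_zero,
        mul_zero]
      rw [rueppel_even]
    · simp only [hM, hv1, hv2, Matrix.submatrix_apply, Matrix.of_apply, eO, Equiv.coe_fn_mk,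
        Sum.elim_inl, Sum.elim_inr, Pi.add_apply, Pi.zero_apply, zero_add, Fin.val_mk,
        Fin.val_zero, mul_zero, add_zero]
      rw [rueppel_odd]
  have hsplit : M.det = (M.updateCol (Sum.inl 0) v1).det +
      (M.updateCol (Sum.inl 0) v2).det := by
    conv_lhs => rw [← Matrix.updateCol_eq_self M (Sum.inl 0), hcol]
    rw [Matrix.det_updateCol_add]
  have hM2 : M.updateCol (Sum.inl 0) v2 = Matrix.fromBlocks 0
      (Matrix.of fun (a : Fin (m + 1)) (b : Fin m) => rueppel (a.1 + b.1))
      (Matrix.of fun (a : Fin m) (b : Fin (m + 1)) => rueppel (a.1 + b.1)) 0 := by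
    funext i j
    rcases i with a | a <;> rcases j with b | b <;>
      simp only [Matrix.updateCol_apply, hv2, hM, Matrix.submatrix_apply, Matrix.of_apply,
        eO, Equiv.coe_fn_mk, Sum.elim_inl, Sum.elim_inr, Matrix.fromBlocks, Matrix.zero_apply,
        Fin.val_mk, Pi.zero_apply, Sum.inl.injEq, reduceCtorEq, if_false]
    · by_cases hb : b = (0 : Fin (m + 1))
      · simp [hb]
      · rw [if_neg hb, show 2 * a.1 + 2 * b.1 = 2 * (a.1 + b.1) by ring, rueppel_even,
          if_neg (by intro hz; exact hb (Fin.ext (by have : ((0 : Fin (m + 1)) : ℕ) = 0 := rfl; omega)))]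
    · rw [show 2 * a.1 + (2 * b.1 + 1) = 2 * (a.1 + b.1) + 1 by ring, rueppel_odd]
    · by_cases hb : b = (0 : Fin (m + 1))
      · simp [hb]
      · rw [if_neg hb, show 2 * a.1 + 1 + 2 * b.1 = 2 * (a.1 + b.1) + 1 by ring, rueppel_odd]
    · rw [show 2 * a.1 + 1 + (2 * b.1 + 1) = 2 * (a.1 + b.1 + 1) by ring, rueppel_even,
        if_neg (by omega)]
  have hd2 : (M.updateCol (Sum.inl 0) v2).det = 0 := by
    rw [hM2]
    exact det_offdiag_lt (by omega) _ _
  set N := (M.updateCol (Sum.inl 0) v1).submatrix (g m m) (g m m) with hNdef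
  have hd1 : (M.updateCol (Sum.inl 0) v1).det = N.det :=
    (Matrix.det_submatrix_equiv_self _ _).symm
  have h21 : N.toBlocks₂₁ = 0 := by
    ext x b
    rcases x with a | a <;>
      simp [hNdef, Matrix.toBlocks₂₁, g, Matrix.updateCol_apply, hv1, Fin.val_succ]
  have h11 : N.toBlocks₁₁.det = 1 := by
    rw [Matrix.det_fin_one]
    simp [hNdef, Matrix.toBlocks₁₁, g, Matrix.updateCol_apply, hv1]
  have h22 : N.toBlocks₂₂ = Matrix.fromBlocks 0
      (Matrix.of fun a b : Fin m => rueppel (a.1 + b.1 + 1))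
      (Matrix.of fun a b : Fin m => rueppel (a.1 + b.1 + 1)) 0 := by
    ext x y
    rcases x with a | a <;> rcases y with b | b <;>
      simp only [hNdef, Matrix.toBlocks₂₂, Matrix.of_apply, Matrix.submatrix_apply, g,
        Equiv.coe_fn_mk, Sum.elim_inl, Sum.elim_inr, Matrix.updateCol_apply, hM,
        Sum.inl.injEq, reduceCtorEq, if_false, eO, Fin.val_mk, Fin.val_succ,
        Matrix.fromBlocks, Matrix.zero_apply]
    · rw [if_neg (by simp [Fin.ext_iff]), show 2 * (a.1 + 1) + 2 * (b.1 + 1) =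
        2 * (a.1 + b.1 + 2) by ring, rueppel_even, if_neg (by omega)]
    · rw [show 2 * (a.1 + 1) + (2 * b.1 + 1) =
        2 * (a.1 + b.1 + 1) + 1 by ring, rueppel_odd]
    · rw [if_neg (by simp [Fin.ext_iff]),
        show 2 * a.1 + 1 + 2 * (b.1 + 1) = 2 * (a.1 + b.1 + 1) + 1 by ring, rueppel_odd]
    · rw [show 2 * a.1 + 1 + (2 * b.1 + 1) = 2 * (a.1 + b.1 + 1) by ring, rueppel_even,
        if_neg (by omega)]
  have hNdet : N.det = (-1) ^ m * (Sd m * Sd m) := by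
    have hb : N.det = (Matrix.fromBlocks N.toBlocks₁₁ N.toBlocks₁₂ N.toBlocks₂₁
        N.toBlocks₂₂).det := by rw [Matrix.fromBlocks_toBlocks]
    rw [hb, h21, Matrix.det_fromBlocks_zero₂₁, h11, h22, det_fromBlocks_zero11, one_mul, Sd]
  rw [hdet, hsplit, hd2, hd1, hNdet, add_zero]

lemma K3 (m : ℕ) : Hd (2 * m + 2) = (-1) ^ (m + 1) * (Hd (m + 1) * Hd (m + 1)) := by
  classical
  set M := (Matrix.of fun i j : Fin (2 * m + 2) => rueppel (i + j)).submatrix (eE m) (eE m)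
    with hM
  have hdet : Hd (2 * m + 2) = M.det := by
    rw [Hd, ← Matrix.det_submatrix_equiv_self (eE m)]
  set v1 : (Fin (m + 1) ⊕ Fin (m + 1)) → ℤ :=
    Sum.elim (fun a => if a.1 = 0 then 1 else 0) 0 with hv1
  set v2 : (Fin (m + 1) ⊕ Fin (m + 1)) → ℤ := Sum.elim 0 (fun a => rueppel a.1) with hv2
  have hcol : (fun i => M i (Sum.inl 0)) = v1 + v2 := by
    funext i
    rcases i with a | a
    · simp only [hM, hv1, hv2, Matrix.submatrix_apply, Matrix.of_apply, eE, Equiv.coe_fn_mk,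
        Sum.elim_inl, Pi.add_apply, Pi.zero_apply, add_zero, Fin.val_mk, Fin.val_zero,
        mul_zero]
      rw [rueppel_even]
    · simp only [hM, hv1, hv2, Matrix.submatrix_apply, Matrix.of_apply, eE, Equiv.coe_fn_mk,
        Sum.elim_inl, Sum.elim_inr, Pi.add_apply, Pi.zero_apply, zero_add, Fin.val_mk,
        Fin.val_zero, mul_zero, add_zero]
      rw [rueppel_odd]
  have hsplit : M.det = (M.updateCol (Sum.inl 0) v1).det +
      (M.updateCol (Sum.inl 0) v2).det := by
    conv_lhs => rw [← Matrix.updateCol_eq_self M (Sum.inl 0), hcol]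
    rw [Matrix.det_updateCol_add]
  have hM2 : M.updateCol (Sum.inl 0) v2 = Matrix.fromBlocks 0
      (Matrix.of fun (a : Fin (m + 1)) (b : Fin (m + 1)) => rueppel (a.1 + b.1))
      (Matrix.of fun (a : Fin (m + 1)) (b : Fin (m + 1)) => rueppel (a.1 + b.1)) 0 := by
    funext i j
    rcases i with a | a <;> rcases j with b | b <;>
      simp only [Matrix.updateCol_apply, hv2, hM, Matrix.submatrix_apply, Matrix.of_apply,
        eE, Equiv.coe_fn_mk, Sum.elim_inl, Sum.elim_inr, Matrix.fromBlocks, Matrix.zero_apply,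
        Fin.val_mk, Pi.zero_apply, Sum.inl.injEq, reduceCtorEq, if_false]
    · by_cases hb : b = (0 : Fin (m + 1))
      · simp [hb]
      · rw [if_neg hb, show 2 * a.1 + 2 * b.1 = 2 * (a.1 + b.1) by ring, rueppel_even,
          if_neg (by intro hz; exact hb (Fin.ext (by have : ((0 : Fin (m + 1)) : ℕ) = 0 := rfl; omega)))]
    · rw [show 2 * a.1 + (2 * b.1 + 1) = 2 * (a.1 + b.1) + 1 by ring, rueppel_odd]
    · by_cases hb : b = (0 : Fin (m + 1))
      · simp [hb]
      · rw [if_neg hb, show 2 * a.1 + 1 + 2 * b.1 = 2 * (a.1 + b.1) + 1 by ring, rueppel_odd]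
    · rw [show 2 * a.1 + 1 + (2 * b.1 + 1) = 2 * (a.1 + b.1 + 1) by ring, rueppel_even,
        if_neg (by omega)]
  have hd2 : (M.updateCol (Sum.inl 0) v2).det =
      (-1) ^ (m + 1) * (Hd (m + 1) * Hd (m + 1)) := by
    rw [hM2, det_fromBlocks_zero11, Hd]
  set N := (M.updateCol (Sum.inl 0) v1).submatrix (g m (m + 1)) (g m (m + 1)) with hNdef
  have hd1 : (M.updateCol (Sum.inl 0) v1).det = N.det :=
    (Matrix.det_submatrix_equiv_self _ _).symm
  have h21 : N.toBlocks₂₁ = 0 := by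
    ext x b
    rcases x with a | a <;>
      simp [hNdef, Matrix.toBlocks₂₁, g, Matrix.updateCol_apply, hv1, Fin.val_succ]
  have h11 : N.toBlocks₁₁.det = 1 := by
    rw [Matrix.det_fin_one]
    simp [hNdef, Matrix.toBlocks₁₁, g, Matrix.updateCol_apply, hv1]
  have h22 : N.toBlocks₂₂ = Matrix.fromBlocks 0
      (Matrix.of fun (a : Fin m) (b : Fin (m + 1)) => rueppel (a.1 + b.1 + 1))
      (Matrix.of fun (a : Fin (m + 1)) (b : Fin m) => rueppel (a.1 + b.1 + 1)) 0 := by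
    ext x y
    rcases x with a | a <;> rcases y with b | b <;>
      simp only [hNdef, Matrix.toBlocks₂₂, Matrix.of_apply, Matrix.submatrix_apply, g,
        Equiv.coe_fn_mk, Sum.elim_inl, Sum.elim_inr, Matrix.updateCol_apply, hM,
        Sum.inl.injEq, reduceCtorEq, if_false, eE, Fin.val_mk, Fin.val_succ,
        Matrix.fromBlocks, Matrix.zero_apply]
    · rw [if_neg (by simp [Fin.ext_iff]), show 2 * (a.1 + 1) + 2 * (b.1 + 1) =
        2 * (a.1 + b.1 + 2) by ring, rueppel_even, if_neg (by omega)]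
    · rw [show 2 * (a.1 + 1) + (2 * b.1 + 1) =
        2 * (a.1 + b.1 + 1) + 1 by ring, rueppel_odd]
    · rw [if_neg (by simp [Fin.ext_iff]),
        show 2 * a.1 + 1 + 2 * (b.1 + 1) = 2 * (a.1 + b.1 + 1) + 1 by ring, rueppel_odd]
    · rw [show 2 * a.1 + 1 + (2 * b.1 + 1) = 2 * (a.1 + b.1 + 1) by ring, rueppel_even,
        if_neg (by omega)]
  have hNdet : N.det = 0 := by
    have hb : N.det = (Matrix.fromBlocks N.toBlocks₁₁ N.toBlocks₁₂ N.toBlocks₂₁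
        N.toBlocks₂₂).det := by rw [Matrix.fromBlocks_toBlocks]
    rw [hb, h21, Matrix.det_fromBlocks_zero₂₁, h11, h22, det_offdiag_gt (by omega), mul_zero]
  rw [hdet, hsplit, hd2, hd1, hNdet, zero_add]

lemma npc (a b : ℕ) (hab : a % 2 = b % 2) : (-1 : ℤ) ^ a = (-1 : ℤ) ^ b := by
  conv_lhs => rw [← Nat.div_add_mod a 2]
  conv_rhs => rw [← Nat.div_add_mod b 2]
  rw [pow_add, pow_add, pow_mul, pow_mul, hab]
  norm_num

lemma Sd_one : Sd 1 = 1 := by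
  rw [Sd, Matrix.det_fin_one]
  simp only [Matrix.of_apply, Fin.val_zero]
  norm_num [rueppel_one]

lemma main (n : ℕ) : Hd n = (-1 : ℤ) ^ (n * (n - 1) / 2) ∧ Sd n * Sd n = 1 := by
  induction n using Nat.strong_induction_on with
  | _ n ih =>
    rcases n with _ | n'
    · constructor
      · rw [Hd]; norm_num [Matrix.det_fin_zero]
      · rw [Sd]; norm_num [Matrix.det_fin_zero]
    · rcases Nat.even_or_odd (n' + 1) with ⟨m, hm⟩ | ⟨m, hm⟩
    -- even: n'+1 = 2m, m = m''+1
      · rcases m with _ | m''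
        · omega
        · have hn : n' + 1 = 2 * m'' + 2 := by omega
          obtain ⟨h1, h2⟩ := ih (m'' + 1) (by omega)
          have hh : Hd (m'' + 1) * Hd (m'' + 1) = 1 := by
            rw [h1, ← pow_add, npc ((m''+1)*((m''+1)-1)/2 + (m''+1)*((m''+1)-1)/2) 0
              (by omega), pow_zero]
          constructor
          · rw [hn, K3, hh, mul_one]
            apply npc
            have he : (2 * m'' + 2) * (2 * m'' + 2 - 1) / 2 = (m'' + 1) * (2 * m'' + 1) := by
              have hsub : 2 * m'' + 2 - 1 = 2 * m'' + 1 := by omega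
              have : (2 * m'' + 2) * (2 * m'' + 2 - 1) = ((m'' + 1) * (2 * m'' + 1)) * 2 := by
                rw [hsub]; ring
              rw [this, Nat.mul_div_cancel _ (by norm_num)]
            rw [he, Nat.mul_mod, show (2 * m'' + 1) % 2 = 1 by omega, mul_one]
            omega
          · rw [hn, K2]
            calc Hd (m'' + 1) * Sd (m'' + 1) * (Hd (m'' + 1) * Sd (m'' + 1))
                = (Hd (m'' + 1) * Hd (m'' + 1)) * (Sd (m'' + 1) * Sd (m'' + 1)) := by ring
              _ = 1 := by rw [hh, h2, mul_one]
      -- odd: n'+1 = 2m+1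
      · have hn : n' + 1 = 2 * m + 1 := by omega
        obtain ⟨h1, h2⟩ := ih m (by omega)
        constructor
        · rw [hn, K4, h2, mul_one]
          apply npc
          have he : (2 * m + 1) * (2 * m + 1 - 1) / 2 = m * (2 * m + 1) := by
            have hsub : 2 * m + 1 - 1 = 2 * m := by omega
            have : (2 * m + 1) * (2 * m + 1 - 1) = (m * (2 * m + 1)) * 2 := by
              rw [hsub]; ring
            rw [this, Nat.mul_div_cancel _ (by norm_num)]
          rw [he, Nat.mul_mod, show (2 * m + 1) % 2 = 1 by omega, mul_one]
          omega
        · rcases m with _ | m'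
          · have h1' : n' + 1 = 1 := by omega
            rw [h1', Sd_one, mul_one]
          · obtain ⟨g1, g2⟩ := ih (m' + 2) (by omega)
            obtain ⟨_, g3⟩ := ih (m' + 1) (by omega)
            have hh : Hd (m' + 2) * Hd (m' + 2) = 1 := by
              rw [g1, ← pow_add, npc ((m'+2)*((m'+2)-1)/2 + (m'+2)*((m'+2)-1)/2) 0
                (by omega), pow_zero]
            have hn2 : n' + 1 = 2 * (m' + 1) + 1 := by omega
            rw [hn2, K1]
            calc Hd (m' + 1 + 1) * Sd (m' + 1) * (Hd (m' + 1 + 1) * Sd (m' + 1))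
                = (Hd (m' + 2) * Hd (m' + 2)) * (Sd (m' + 1) * Sd (m' + 1)) := by ring_nf
              _ = 1 := by rw [hh, g3, mul_one]

lemma hstar_eq (n : ℕ) : hstar n = Sd (n + 1) := rfl

lemma Hd_eq_h (n : ℕ) : Hd (n + 1) = h n := by
  obtain ⟨h1, _⟩ := main (n + 1)
  rw [h1, h]
  apply npc
  have : (n + 1) * (n + 1 - 1) = n * (n + 1) := by
    simp [Nat.add_sub_cancel, Nat.mul_comm]
  rw [this]

theorem hankel_shifted_rueppel :
    hstar 0 = h 0 ∧
    (∀ n : ℕ, 1 ≤ n → hstar (2 * n) = hstar (n - 1) * h n) ∧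
    (∀ n : ℕ, hstar (2 * n + 1) = hstar n * h n) := by
  refine ⟨?_, ?_, ?_⟩
  · rw [hstar_eq, Sd_one, h]
    norm_num
  · intro n hn
    rw [hstar_eq, hstar_eq, show 2 * n + 1 = 2 * n + 1 from rfl, K1, Hd_eq_h,
      show n - 1 + 1 = n by omega, mul_comm]
  · intro n
    rw [hstar_eq, hstar_eq, show 2 * n + 1 + 1 = 2 * n + 2 by omega, K2, Hd_eq_h, mul_comm]
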